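/- A Turing degree computes a diagonally non-computable function if and only if it computes a fixpoint-free function: for every set X, there is an X-computable d.n.c. function (relative to ∅) iff there is an X-computable function f with W_e ≠ W_{f(e)} for all e. -/

import Mathlib

open Classical Filter

noncomputable section

/-- Codes for partial functions recursive in an oracle. -/
inductive OCode : Type
  | zero | succ | left | right | oracle
  | pair (a b : OCode) | comp (a b : OCode) | prec (a b : OCode) | rfind' (a : OCode)

/-- Evaluation of an oracle code with oracle `O`. -/
def OCode.eval (O : ℕ →. ℕ) : OCode → ℕ →. ℕ
  | .zero => pure 0
  | .succ => Nat.succ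
  | .left => ↑fun n : ℕ => n.unpair.1
  | .right => ↑fun n : ℕ => n.unpair.2
  | .oracle => O
  | .pair a b => fun n => Nat.pair <$> a.eval O n <*> b.eval O n
  | .comp a b => fun n => b.eval O n >>= a.eval O
  | .prec a b => Nat.unpaired fun m n =>
      n.rec (a.eval O m) fun y IH => do let i ← IH; b.eval O (Nat.pair m (Nat.pair y i))
  | .rfind' a => fun n => Nat.rfind fun m => (fun k => k = 0) <$> a.eval O (Nat.pair n m)

/-- An injective numbering of oracle codes. -/
def OCode.encodeC : OCode → ℕ
  | .zero => Nat.pair 0 0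
  | .succ => Nat.pair 1 0
  | .left => Nat.pair 2 0
  | .right => Nat.pair 3 0
  | .oracle => Nat.pair 4 0
  | .pair a b => Nat.pair 5 (Nat.pair a.encodeC b.encodeC)
  | .comp a b => Nat.pair 6 (Nat.pair a.encodeC b.encodeC)
  | .prec a b => Nat.pair 7 (Nat.pair a.encodeC b.encodeC)
  | .rfind' a => Nat.pair 8 a.encodeC

/-- `f` is partial recursive in the oracle `O`. -/
def RecIn (O : ℕ →. ℕ) (f : ℕ →. ℕ) : Prop := ∃ c : OCode, c.eval O = f

/-- The `e`-th partial function recursive in `O` (`Φ_e^O`). -/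
def phi (O : ℕ →. ℕ) (e : ℕ) : ℕ →. ℕ :=
  if h : ∃ c : OCode, c.encodeC = e then h.choose.eval O else fun _ => Part.none

/-- The characteristic function of a set of naturals, as an oracle. -/
def chOracle (X : Set ℕ) : ℕ →. ℕ := fun n => Part.some (if n ∈ X then 1 else 0)

/-- A total function as an oracle. -/
def fnOracle (f : ℕ → ℕ) : ℕ →. ℕ := fun n => Part.some (f n)

/-- A two-variable total function as an oracle. -/
def pairFnOracle (f : ℕ → ℕ → ℕ) : ℕ →. ℕ :=
  fun n => Part.some (f n.unpair.1 n.unpair.2)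

/-- The Turing jump of a set `X` : the halting problem relative to `X`. -/
def jumpSet (X : Set ℕ) : Set ℕ := {e | (phi (chOracle X) e e).Dom}

/-- The effective join of two sets of naturals. -/
def joinSet (A B : Set ℕ) : Set ℕ :=
  {n | (n % 2 = 0 ∧ n / 2 ∈ A) ∨ (n % 2 = 1 ∧ n / 2 ∈ B)}

/-- The join of two oracles. -/
def joinO (O₁ O₂ : ℕ →. ℕ) : ℕ →. ℕ :=
  fun n => if n % 2 = 0 then O₁ (n / 2) else O₂ (n / 2)

/-- Turing reducibility between sets of naturals. -/
def setLEset (A B : Set ℕ) : Prop :=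
  RecIn (chOracle B) (fnOracle fun n => if n ∈ A then 1 else 0)

-- ################ development ################

theorem OCode.encodeC_injective : Function.Injective OCode.encodeC := by
  intro c
  induction c with
  | zero => intro d h; cases d <;> simp [encodeC, Nat.pair_eq_pair] at h ⊢
  | succ => intro d h; cases d <;> simp [encodeC, Nat.pair_eq_pair] at h ⊢
  | left => intro d h; cases d <;> simp [encodeC, Nat.pair_eq_pair] at h ⊢
  | right => intro d h; cases d <;> simp [encodeC, Nat.pair_eq_pair] at h ⊢
  | oracle => intro d h; cases d <;> simp [encodeC, Nat.pair_eq_pair] at h ⊢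
  | pair a b iha ihb =>
      intro d h; cases d <;> simp [encodeC, Nat.pair_eq_pair] at h ⊢
      exact ⟨iha h.1, ihb h.2⟩
  | comp a b iha ihb =>
      intro d h; cases d <;> simp [encodeC, Nat.pair_eq_pair] at h ⊢
      exact ⟨iha h.1, ihb h.2⟩
  | prec a b iha ihb =>
      intro d h; cases d <;> simp [encodeC, Nat.pair_eq_pair] at h ⊢
      exact ⟨iha h.1, ihb h.2⟩
  | rfind' a iha =>
      intro d h; cases d <;> simp [encodeC, Nat.pair_eq_pair] at h ⊢
      exact iha h

theorem phi_encodeC (O : ℕ →. ℕ) (c : OCode) : phi O c.encodeC = c.eval O := by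
  have h : ∃ d : OCode, d.encodeC = c.encodeC := ⟨c, rfl⟩
  refine (dif_pos h).trans ?_
  rw [OCode.encodeC_injective h.choose_spec]

theorem phi_invalid (O : ℕ →. ℕ) {e : ℕ} (h : ∀ c : OCode, c.encodeC ≠ e) :
    phi O e = fun _ => Part.none := by
  exact dif_neg (by push_neg; exact h)

theorem Nat.Partrec.recIn {f : ℕ →. ℕ} (h : Nat.Partrec f) (O : ℕ →. ℕ) : RecIn O f := by
  induction h with
  | zero => exact ⟨.zero, rfl⟩
  | succ => exact ⟨.succ, rfl⟩
  | left => exact ⟨.left, rfl⟩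
  | right => exact ⟨.right, rfl⟩
  | pair _ _ ihf ihg =>
      obtain ⟨cf, hf⟩ := ihf; obtain ⟨cg, hg⟩ := ihg
      exact ⟨.pair cf cg, by simp [OCode.eval, hf, hg]; rfl⟩
  | comp _ _ ihf ihg =>
      obtain ⟨cf, hf⟩ := ihf; obtain ⟨cg, hg⟩ := ihg
      exact ⟨.comp cf cg, by simp [OCode.eval, hf, hg]; rfl⟩
  | prec _ _ ihf ihg =>
      obtain ⟨cf, hf⟩ := ihf; obtain ⟨cg, hg⟩ := ihg
      exact ⟨.prec cf cg, by simp [OCode.eval, hf, hg]; rfl⟩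
  | rfind _ ihf =>
      obtain ⟨cf, hf⟩ := ihf
      exact ⟨.rfind' cf, by simp [OCode.eval, hf]; rfl⟩

theorem Computable.recIn {k : ℕ → ℕ} (h : Computable k) (O : ℕ →. ℕ) :
    RecIn O (fnOracle k) := by
  have : Nat.Partrec (k : ℕ →. ℕ) := Partrec.nat_iff.1 h
  exact this.recIn O

theorem RecIn.compTotal {O : ℕ →. ℕ} {f g : ℕ → ℕ}
    (hf : RecIn O (fnOracle f)) (hg : RecIn O (fnOracle g)) :
    RecIn O (fnOracle fun n => f (g n)) := by
  obtain ⟨cf, hf⟩ := hf; obtain ⟨cg, hg⟩ := hg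
  refine ⟨.comp cf cg, funext fun n => ?_⟩
  show cg.eval O n >>= cf.eval O = _
  simp [hf, hg, fnOracle]
  exact Part.bind_some _ _

def oconst : ℕ → OCode
  | 0 => .zero
  | n + 1 => .comp .succ (oconst n)

theorem oconst_eval (O : ℕ →. ℕ) (m x : ℕ) : (oconst m).eval O x = Part.some m := by
  induction m with
  | zero => rfl
  | succ n ih =>
      show (oconst n).eval O x >>= OCode.eval O .succ = _
      simp [ih, OCode.eval]
      exact Part.bind_some _ _

def oid : OCode := .pair .left .right

theorem oid_eval (O : ℕ →. ℕ) (x : ℕ) : oid.eval O x = Part.some x := by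
  show Nat.pair <$> _ <*> _ = _
  simp [OCode.eval, Seq.seq]


open Nat.Partrec (Code)

def cnone : Code := .comp (.rfind' .succ) (.pair .id .zero)

theorem eval_rfind_aux (c : Code) :
    (Code.comp (.rfind' c) (.pair .id .zero)).eval =
      fun n => Nat.rfind fun m => (fun k => k = 0) <$> c.eval (Nat.pair n m) := by
  simp [Nat.Partrec.Code.eval, Seq.seq, pure, PFun.pure, Part.map_id']
  rfl

theorem eval_cnone (x : ℕ) : cnone.eval x = Part.none := by
  rw [cnone, eval_rfind_aux]
  apply Part.eq_none_iff.2
  intro a ha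
  have := Nat.rfind_spec ha
  simp [Nat.Partrec.Code.eval] at this

theorem pair_right_lt {k p : ℕ} (hk : k ≠ 0) : p < Nat.pair k p := by
  rw [Nat.pair]
  split
  · nlinarith [Nat.pos_of_ne_zero hk]
  · nlinarith [Nat.pos_of_ne_zero hk]

theorem unpair_right_lt {n : ℕ} (h : n.unpair.1 ≠ 0) : n.unpair.2 < n := by
  conv_rhs => rw [← Nat.pair_unpair n]
  exact pair_right_lt h

def decC (n : ℕ) : Option Code :=
  if n.unpair.1 = 0 then (if n.unpair.2 = 0 then some .zero else none)
  else if n.unpair.1 = 1 then (if n.unpair.2 = 0 then some .succ else none)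
  else if n.unpair.1 = 2 then (if n.unpair.2 = 0 then some .left else none)
  else if n.unpair.1 = 3 then (if n.unpair.2 = 0 then some .right else none)
  else if n.unpair.1 = 4 then (if n.unpair.2 = 0 then some .zero else none)
  else if n.unpair.1 = 5 then
    (decC n.unpair.2.unpair.1).bind fun a =>
      (decC n.unpair.2.unpair.2).map fun b => .pair a b
  else if n.unpair.1 = 6 then
    (decC n.unpair.2.unpair.1).bind fun a =>
      (decC n.unpair.2.unpair.2).map fun b => .comp a b
  else if n.unpair.1 = 7 then
    (decC n.unpair.2.unpair.1).bind fun a =>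
      (decC n.unpair.2.unpair.2).map fun b => .prec a b
  else if n.unpair.1 = 8 then
    (decC n.unpair.2).map fun a => .comp (.rfind' a) (.pair .id .zero)
  else none
  termination_by n
  decreasing_by
  all_goals
    first
    | exact lt_of_le_of_lt (Nat.unpair_left_le _) (unpair_right_lt (by omega))
    | exact lt_of_le_of_lt (Nat.unpair_right_le _) (unpair_right_lt (by omega))
    | exact unpair_right_lt (by omega)

def tc : OCode → Code
  | .zero => .zero
  | .succ => .succ
  | .left => .left
  | .right => .right
  | .oracle => .zero
  | .pair a b => .pair (tc a) (tc b)
  | .comp a b => .comp (tc a) (tc b)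
  | .prec a b => .prec (tc a) (tc b)
  | .rfind' a => .comp (.rfind' (tc a)) (.pair .id .zero)

theorem tc_eval (c : OCode) : (tc c).eval = c.eval (chOracle ∅) := by
  induction c with
  | zero => rfl
  | succ => rfl
  | left => rfl
  | right => rfl
  | oracle =>
      funext n
      show Part.some 0 = _
      simp [OCode.eval, chOracle]
  | pair a b iha ihb => show Code.eval (.pair _ _) = _; simp [Nat.Partrec.Code.eval, OCode.eval, iha, ihb]; rfl
  | comp a b iha ihb => show Code.eval (.comp _ _) = _; simp [Nat.Partrec.Code.eval, OCode.eval, iha, ihb]; rfl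
  | prec a b iha ihb => show Code.eval (.prec _ _) = _; simp [Nat.Partrec.Code.eval, OCode.eval, iha, ihb]; rfl
  | rfind' a iha =>
      show (Code.comp (.rfind' (tc a)) (.pair .id .zero)).eval = _
      rw [eval_rfind_aux, iha]
      rfl

theorem decC_encodeC (c : OCode) : decC c.encodeC = some (tc c) := by
  induction c with
  | zero => rw [OCode.encodeC, decC]; simp [tc]
  | succ => rw [OCode.encodeC, decC]; simp [tc]
  | left => rw [OCode.encodeC, decC]; simp [tc]
  | right => rw [OCode.encodeC, decC]; simp [tc]
  | oracle => rw [OCode.encodeC, decC]; simp [tc]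
  | pair a b iha ihb => rw [OCode.encodeC, decC]; simp [iha, ihb, tc]
  | comp a b iha ihb => rw [OCode.encodeC, decC]; simp [iha, ihb, tc]
  | prec a b iha ihb => rw [OCode.encodeC, decC]; simp [iha, ihb, tc]
  | rfind' a iha => rw [OCode.encodeC, decC]; simp [iha, tc]

theorem decC_k (e : ℕ) :
    (e.unpair.1 = 0 → decC e = if e.unpair.2 = 0 then some .zero else none) ∧
    (e.unpair.1 = 1 → decC e = if e.unpair.2 = 0 then some .succ else none) ∧
    (e.unpair.1 = 2 → decC e = if e.unpair.2 = 0 then some .left else none) ∧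
    (e.unpair.1 = 3 → decC e = if e.unpair.2 = 0 then some .right else none) ∧
    (e.unpair.1 = 4 → decC e = if e.unpair.2 = 0 then some .zero else none) ∧
    (e.unpair.1 = 5 → decC e = (decC e.unpair.2.unpair.1).bind fun a =>
      (decC e.unpair.2.unpair.2).map fun b => .pair a b) ∧
    (e.unpair.1 = 6 → decC e = (decC e.unpair.2.unpair.1).bind fun a =>
      (decC e.unpair.2.unpair.2).map fun b => .comp a b) ∧
    (e.unpair.1 = 7 → decC e = (decC e.unpair.2.unpair.1).bind fun a =>
      (decC e.unpair.2.unpair.2).map fun b => .prec a b) ∧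
    (e.unpair.1 = 8 → decC e = (decC e.unpair.2).map fun a =>
      .comp (.rfind' a) (.pair .id .zero)) ∧
    (9 ≤ e.unpair.1 → decC e = none) := by
  refine ⟨fun hk => ?_, fun hk => ?_, fun hk => ?_, fun hk => ?_, fun hk => ?_,
    fun hk => ?_, fun hk => ?_, fun hk => ?_, fun hk => ?_, fun hk => ?_⟩
  · rw [decC]; simp [hk]
  · rw [decC]; simp [hk]
  · rw [decC]; simp [hk]
  · rw [decC]; simp [hk]
  · rw [decC]; simp [hk]
  · rw [decC]; simp [hk]
  · rw [decC]; simp [hk]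
  · rw [decC]; simp [hk]
  · rw [decC]; simp [hk]
  · rw [decC]
    repeat rw [if_neg (by omega)]

theorem pair_k_eq {e k : ℕ} (hk : e.unpair.1 = k) (q : ℕ) (hq : q = e.unpair.2) :
    Nat.pair k q = e := by
  rw [hq, ← hk, Nat.pair_unpair]

set_option maxHeartbeats 2000000 in
theorem decC_some : ∀ {e : ℕ} {c : Code}, decC e = some c →
    ∃ oc : OCode, oc.encodeC = e ∧ c = tc oc := by
  intro e
  induction e using Nat.strong_induction_on with
  | _ e IH =>
  intro c h
  have hK := decC_k e
  have hcase : e.unpair.1 = 0 ∨ e.unpair.1 = 1 ∨ e.unpair.1 = 2 ∨ e.unpair.1 = 3 ∨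
      e.unpair.1 = 4 ∨ e.unpair.1 = 5 ∨ e.unpair.1 = 6 ∨ e.unpair.1 = 7 ∨
      e.unpair.1 = 8 ∨ 9 ≤ e.unpair.1 := by omega
  rcases hcase with hk | hk | hk | hk | hk | hk | hk | hk | hk | hk
  · rw [hK.1 hk] at h
    split_ifs at h with hb
    · cases h
      exact ⟨.zero, pair_k_eq hk 0 hb.symm, rfl⟩
  · rw [hK.2.1 hk] at h
    split_ifs at h with hb
    · cases h
      exact ⟨.succ, pair_k_eq hk 0 hb.symm, rfl⟩
  · rw [hK.2.2.1 hk] at h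
    split_ifs at h with hb
    · cases h
      exact ⟨.left, pair_k_eq hk 0 hb.symm, rfl⟩
  · rw [hK.2.2.2.1 hk] at h
    split_ifs at h with hb
    · cases h
      exact ⟨.right, pair_k_eq hk 0 hb.symm, rfl⟩
  · rw [hK.2.2.2.2.1 hk] at h
    split_ifs at h with hb
    · cases h
      exact ⟨.oracle, pair_k_eq hk 0 hb.symm, rfl⟩
  · rw [hK.2.2.2.2.2.1 hk] at h
    rw [Option.bind_eq_some_iff] at h
    obtain ⟨a, ha, hb⟩ := h
    rw [Option.map_eq_some_iff] at hb
    obtain ⟨b, hb, rfl⟩ := hb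
    obtain ⟨oc1, he1, rfl⟩ := IH _ (lt_of_le_of_lt (Nat.unpair_left_le _) (unpair_right_lt (by omega))) ha
    obtain ⟨oc2, he2, rfl⟩ := IH _ (lt_of_le_of_lt (Nat.unpair_right_le _) (unpair_right_lt (by omega))) hb
    refine ⟨.pair oc1 oc2, ?_, rfl⟩
    rw [OCode.encodeC, he1, he2]
    rw [Nat.pair_unpair, ← hk, Nat.pair_unpair]
  · rw [hK.2.2.2.2.2.2.1 hk] at h
    rw [Option.bind_eq_some_iff] at h
    obtain ⟨a, ha, hb⟩ := h
    rw [Option.map_eq_some_iff] at hb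
    obtain ⟨b, hb, rfl⟩ := hb
    obtain ⟨oc1, he1, rfl⟩ := IH _ (lt_of_le_of_lt (Nat.unpair_left_le _) (unpair_right_lt (by omega))) ha
    obtain ⟨oc2, he2, rfl⟩ := IH _ (lt_of_le_of_lt (Nat.unpair_right_le _) (unpair_right_lt (by omega))) hb
    refine ⟨.comp oc1 oc2, ?_, rfl⟩
    rw [OCode.encodeC, he1, he2]
    rw [Nat.pair_unpair, ← hk, Nat.pair_unpair]
  · rw [hK.2.2.2.2.2.2.2.1 hk] at h
    rw [Option.bind_eq_some_iff] at h
    obtain ⟨a, ha, hb⟩ := h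
    rw [Option.map_eq_some_iff] at hb
    obtain ⟨b, hb, rfl⟩ := hb
    obtain ⟨oc1, he1, rfl⟩ := IH _ (lt_of_le_of_lt (Nat.unpair_left_le _) (unpair_right_lt (by omega))) ha
    obtain ⟨oc2, he2, rfl⟩ := IH _ (lt_of_le_of_lt (Nat.unpair_right_le _) (unpair_right_lt (by omega))) hb
    refine ⟨.prec oc1 oc2, ?_, rfl⟩
    rw [OCode.encodeC, he1, he2]
    rw [Nat.pair_unpair, ← hk, Nat.pair_unpair]
  · rw [hK.2.2.2.2.2.2.2.2.1 hk] at h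
    rw [Option.map_eq_some_iff] at h
    obtain ⟨a, ha, rfl⟩ := h
    obtain ⟨oc1, he1, rfl⟩ := IH _ (unpair_right_lt (by omega)) ha
    refine ⟨.rfind' oc1, ?_, rfl⟩
    rw [OCode.encodeC, he1]
    rw [← hk, Nat.pair_unpair]
  · rw [hK.2.2.2.2.2.2.2.2.2 hk] at h
    exact absurd h (by simp)

def gc (e : ℕ) : Code := (decC e).getD cnone

theorem phi_gc (e : ℕ) : phi (chOracle ∅) e = (gc e).eval := by
  by_cases hv : ∃ c : OCode, c.encodeC = e
  · obtain ⟨c, rfl⟩ := hv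
    rw [phi_encodeC, gc, decC_encodeC, Option.getD_some, tc_eval]
  · push_neg at hv
    rw [phi_invalid _ hv]
    have hd : decC e = none := by
      cases hdc : decC e with
      | none => rfl
      | some c =>
          obtain ⟨oc, he, -⟩ := decC_some hdc
          exact absurd (hv oc he) (by simp)
    rw [gc, hd, Option.getD_none]
    funext x
    exact (eval_cnone x).symm


open Nat.Partrec.Code in
theorem decC_primrec : Primrec decC := by
  classical
  have hg : Primrec₂ (fun (_ : Unit) (l : List (Option Code)) =>
      (some (
      if l.length.unpair.1 = 0 then (if l.length.unpair.2 = 0 then some Code.zero else none)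
      else if l.length.unpair.1 = 1 then (if l.length.unpair.2 = 0 then some Code.succ else none)
      else if l.length.unpair.1 = 2 then (if l.length.unpair.2 = 0 then some Code.left else none)
      else if l.length.unpair.1 = 3 then (if l.length.unpair.2 = 0 then some Code.right else none)
      else if l.length.unpair.1 = 4 then (if l.length.unpair.2 = 0 then some Code.zero else none)
      else if l.length.unpair.1 = 5 then
        (l.getD l.length.unpair.2.unpair.1 none).bind fun a =>
          (l.getD l.length.unpair.2.unpair.2 none).map fun b => Code.pair a b
      else if l.length.unpair.1 = 6 then
        (l.getD l.length.unpair.2.unpair.1 none).bind fun a =>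
          (l.getD l.length.unpair.2.unpair.2 none).map fun b => Code.comp a b
      else if l.length.unpair.1 = 7 then
        (l.getD l.length.unpair.2.unpair.1 none).bind fun a =>
          (l.getD l.length.unpair.2.unpair.2 none).map fun b => Code.prec a b
      else if l.length.unpair.1 = 8 then
        (l.getD l.length.unpair.2 none).map fun a =>
          Code.comp (.rfind' a) (.pair .id .zero)
      else none) : Option (Option Code))) := by
    apply Primrec.option_some.comp₂
    have hL : Primrec fun p : Unit × List (Option Code) => p.2 := Primrec.snd
    have hn : Primrec fun p : Unit × List (Option Code) => p.2.length :=
      Primrec.list_length.comp hL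
    have hu1 : Primrec fun p : Unit × List (Option Code) => p.2.length.unpair.1 :=
      Primrec.fst.comp (Primrec.unpair.comp hn)
    have hu2 : Primrec fun p : Unit × List (Option Code) => p.2.length.unpair.2 :=
      Primrec.snd.comp (Primrec.unpair.comp hn)
    have hu21 : Primrec fun p : Unit × List (Option Code) => p.2.length.unpair.2.unpair.1 :=
      Primrec.fst.comp (Primrec.unpair.comp hu2)
    have hu22 : Primrec fun p : Unit × List (Option Code) => p.2.length.unpair.2.unpair.2 :=
      Primrec.snd.comp (Primrec.unpair.comp hu2)
    have hget : ∀ {f : Unit × List (Option Code) → ℕ}, Primrec f →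
        Primrec fun p : Unit × List (Option Code) => p.2.getD (f p) none :=
      fun hf => (Primrec.list_getD none).comp hL hf
    have hcond : ∀ k : ℕ, PrimrecPred fun p : Unit × List (Option Code) =>
        p.2.length.unpair.1 = k :=
      fun k => Primrec.eq.comp hu1 (Primrec.const k)
    have hcond2 : PrimrecPred fun p : Unit × List (Option Code) =>
        p.2.length.unpair.2 = 0 := Primrec.eq.comp hu2 (Primrec.const 0)
    have hleaf : ∀ c : Code, Primrec fun p : Unit × List (Option Code) =>
        (if p.2.length.unpair.2 = 0 then some c else none) :=
      fun c => Primrec.ite hcond2 (Primrec.const (some c)) (Primrec.const none)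
    have hbin : ∀ {F : Code → Code → Code}, Primrec₂ F →
        Primrec fun p : Unit × List (Option Code) =>
          (p.2.getD p.2.length.unpair.2.unpair.1 none).bind fun a =>
            (p.2.getD p.2.length.unpair.2.unpair.2 none).map fun b => F a b := by
      intro F hF
      apply Primrec.option_bind (hget hu21)
      apply Primrec.option_map ((hget hu22).comp (Primrec.fst (β := Code)))
      exact hF.comp (Primrec.snd.comp Primrec.fst) Primrec.snd
    refine Primrec.ite (hcond 0) (hleaf Code.zero) ?_
    refine Primrec.ite (hcond 1) (hleaf Code.succ) ?_
    refine Primrec.ite (hcond 2) (hleaf Code.left) ?_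
    refine Primrec.ite (hcond 3) (hleaf Code.right) ?_
    refine Primrec.ite (hcond 4) (hleaf Code.zero) ?_
    refine Primrec.ite (hcond 5) (hbin primrec₂_pair) ?_
    refine Primrec.ite (hcond 6) (hbin primrec₂_comp) ?_
    refine Primrec.ite (hcond 7) (hbin primrec₂_prec) ?_
    refine Primrec.ite (hcond 8) ?_ (Primrec.const none)
    exact Primrec.option_map (hget hu2)
      (primrec₂_comp.comp (primrec_rfind'.comp Primrec.snd)
        (Primrec.const (Code.pair .id .zero))).to₂
  have H := Primrec.nat_strong_rec (fun (_ : Unit) (n : ℕ) => decC n) hg ?_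
  · exact H.comp (Primrec.const ()) Primrec.id
  · intro _ n
    have hlen : ((List.range n).map decC).length = n := by simp
    have hgd : ∀ i, i < n → ((List.range n).map decC).getD i none = decC i := by
      intro i hi
      simp [List.getD_eq_getElem?_getD, List.getElem?_map, List.getElem?_range hi]
    simp only [hlen]
    congr 1
    have hK := decC_k n
    have hcase : n.unpair.1 = 0 ∨ n.unpair.1 = 1 ∨ n.unpair.1 = 2 ∨ n.unpair.1 = 3 ∨
        n.unpair.1 = 4 ∨ n.unpair.1 = 5 ∨ n.unpair.1 = 6 ∨ n.unpair.1 = 7 ∨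
        n.unpair.1 = 8 ∨ 9 ≤ n.unpair.1 := by omega
    have hgd1 : n.unpair.1 ≠ 0 →
        (List.map decC (List.range n)).getD n.unpair.2.unpair.1 none = decC n.unpair.2.unpair.1 :=
      fun h => hgd _ (lt_of_le_of_lt (Nat.unpair_left_le _) (unpair_right_lt h))
    have hgd2 : n.unpair.1 ≠ 0 →
        (List.map decC (List.range n)).getD n.unpair.2.unpair.2 none = decC n.unpair.2.unpair.2 :=
      fun h => hgd _ (lt_of_le_of_lt (Nat.unpair_right_le _) (unpair_right_lt h))
    rcases hcase with hk | hk | hk | hk | hk | hk | hk | hk | hk | hk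
    · rw [hK.1 hk]; simp only [hk]
      repeat rw [if_neg (by omega)]
      simp only [if_true]
    · rw [hK.2.1 hk]; simp only [hk]
      repeat rw [if_neg (by omega)]
      simp only [if_true]
    · rw [hK.2.2.1 hk]; simp only [hk]
      repeat rw [if_neg (by omega)]
      simp only [if_true]
    · rw [hK.2.2.2.1 hk]; simp only [hk]
      repeat rw [if_neg (by omega)]
      simp only [if_true]
    · rw [hK.2.2.2.2.1 hk]; simp only [hk]
      repeat rw [if_neg (by omega)]
      simp only [if_true]
    · rw [hK.2.2.2.2.2.1 hk]; simp only [hk]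
      repeat rw [if_neg (by omega)]
      simp only [if_true]
      rw [hgd1 (by omega), hgd2 (by omega)]
    · rw [hK.2.2.2.2.2.2.1 hk]; simp only [hk]
      repeat rw [if_neg (by omega)]
      simp only [if_true]
      rw [hgd1 (by omega), hgd2 (by omega)]
    · rw [hK.2.2.2.2.2.2.2.1 hk]; simp only [hk]
      repeat rw [if_neg (by omega)]
      simp only [if_true]
      rw [hgd1 (by omega), hgd2 (by omega)]
    · rw [hK.2.2.2.2.2.2.2.2.1 hk]; simp only [hk]
      repeat rw [if_neg (by omega)]
      simp only [if_true]
      rw [hgd _ (unpair_right_lt (by omega))]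
    · rw [hK.2.2.2.2.2.2.2.2.2 hk]
      repeat rw [if_neg (by omega)]

theorem gc_primrec : Primrec gc :=
  (Primrec.option_getD).comp decC_primrec (Primrec.const cnone)

theorem phi_partrec : Partrec fun p : ℕ × ℕ => phi (chOracle ∅) p.1 p.2 := by
  have h : Partrec fun p : ℕ × ℕ => (gc p.1).eval p.2 :=
    Nat.Partrec.Code.eval_part.comp ((gc_primrec.comp Primrec.fst).to_comp) Computable.snd
  exact h.of_eq fun p => by rw [phi_gc]

def encConst : ℕ → ℕ
  | 0 => Nat.pair 0 0
  | n + 1 => Nat.pair 6 (Nat.pair (Nat.pair 1 0) (encConst n))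

theorem encConst_eq (e : ℕ) : (oconst e).encodeC = encConst e := by
  induction e with
  | zero => rfl
  | succ n ih => rw [oconst, OCode.encodeC, encConst, ih]; rfl

theorem encConst_primrec : Primrec encConst := by
  have : Primrec₂ fun (_ : ℕ) (prev : ℕ) =>
      Nat.pair 6 (Nat.pair (Nat.pair 1 0) prev) :=
    Primrec₂.natPair.comp₂ (Primrec₂.const 6)
      (Primrec₂.natPair.comp₂ (Primrec₂.const (Nat.pair 1 0)) Primrec.snd.to₂)
  exact (Primrec.nat_rec₁ (Nat.pair 0 0) this).of_eq fun n => by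
    induction n with
    | zero => rfl
    | succ n ih => simp [encConst, ih]

/-- The s-m-n theorem for the `phi` numbering. -/
theorem phi_smn {F : ℕ →. ℕ} (hF : Nat.Partrec F) :
    ∃ k : ℕ → ℕ, Computable k ∧ ∀ e x, phi (chOracle ∅) (k e) x = F (Nat.pair e x) := by
  obtain ⟨cF, hcF⟩ := hF.recIn (chOracle ∅)
  refine ⟨fun e => (OCode.comp cF (.pair (oconst e) oid)).encodeC, ?_, ?_⟩
  · have : Primrec fun e =>
        Nat.pair 6 (Nat.pair cF.encodeC (Nat.pair 5 (Nat.pair (encConst e) oid.encodeC))) :=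
      Primrec₂.natPair.comp (Primrec.const 6)
        (Primrec₂.natPair.comp (Primrec.const cF.encodeC)
          (Primrec₂.natPair.comp (Primrec.const 5)
            (Primrec₂.natPair.comp encConst_primrec (Primrec.const oid.encodeC))))
    refine (this.of_eq fun e => ?_).to_comp
    rw [OCode.encodeC, OCode.encodeC, encConst_eq]
  · intro e x
    rw [phi_encodeC]
    show (OCode.pair (oconst e) oid).eval _ x >>= cF.eval _ = _
    have h1 : (OCode.pair (oconst e) oid).eval (chOracle ∅) x = Part.some (Nat.pair e x) := by
      show Nat.pair <$> (oconst e).eval _ x <*> oid.eval _ x = _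
      simp [oconst_eval, oid_eval, Seq.seq]
    rw [h1]
    show (Part.some (Nat.pair e x)).bind _ = _
    exact (Part.bind_some _ _).trans (congrFun hcF _)

/-- A computable choice function: `psi e` picks an element of the domain of `φ_e`. -/
def psi (e : ℕ) : Part ℕ :=
  (Nat.rfind fun n =>
      Part.some ((Nat.Partrec.Code.evaln n.unpair.2 (gc e) n.unpair.1).isSome)).map
    fun n => n.unpair.1

theorem psi_partrec : Partrec psi := by
  have hp : Computable₂ fun (e : ℕ) (n : ℕ) =>
      (Nat.Partrec.Code.evaln n.unpair.2 (gc e) n.unpair.1).isSome := by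
    have : Primrec fun p : ℕ × ℕ =>
        ((p.2.unpair.2, gc p.1), p.2.unpair.1) :=
      ((Primrec.snd.comp (Primrec.unpair.comp Primrec.snd)).pair
        (gc_primrec.comp Primrec.fst)).pair
        (Primrec.fst.comp (Primrec.unpair.comp Primrec.snd))
    exact (Primrec.option_isSome.comp
      (Nat.Partrec.Code.primrec_evaln.comp this)).to_comp.to₂
  have hr : Partrec fun e => Nat.rfind fun n =>
      Part.some ((Nat.Partrec.Code.evaln n.unpair.2 (gc e) n.unpair.1).isSome) :=
    Partrec.rfind hp.partrec₂
  exact hr.map ((Primrec.fst.comp (Primrec.unpair.comp Primrec.snd)).to_comp).to₂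

theorem psi_dom {e x : ℕ} (h : (phi (chOracle ∅) e x).Dom) : (psi e).Dom := by
  rw [phi_gc] at h
  obtain ⟨v, hv⟩ := Part.dom_iff_mem.1 h
  obtain ⟨s, hs⟩ := Nat.Partrec.Code.evaln_complete.1 hv
  have hsome : (Nat.Partrec.Code.evaln s (gc e) x).isSome := by
    simp only [Option.isSome_iff_exists]
    exact ⟨v, hs⟩
  show (Nat.rfind _).Dom
  refine Nat.rfind_dom.2 ⟨Nat.pair x s, ?_, fun _ => trivial⟩
  simp [Nat.unpair_pair, hsome]

theorem psi_mem {e y : ℕ} (hy : y ∈ psi e) : (phi (chOracle ∅) e y).Dom := by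
  rw [phi_gc]
  rw [psi, Part.mem_map_iff] at hy
  obtain ⟨n, hn, rfl⟩ := hy
  have h1 : (Nat.Partrec.Code.evaln n.unpair.2 (gc e) n.unpair.1).isSome = true := by
    simpa using Nat.rfind_spec hn
  obtain ⟨v, hv⟩ := Option.isSome_iff_exists.1 h1
  exact Part.dom_iff_mem.2 ⟨v, Nat.Partrec.Code.evaln_sound hv⟩


theorem stmt2_aux (X : Set ℕ) :
    (∃ f : ℕ → ℕ, RecIn (chOracle X) (fnOracle f) ∧
      ∀ e : ℕ, f e ∉ phi (chOracle ∅) e e) ↔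
    (∃ f : ℕ → ℕ, RecIn (chOracle X) (fnOracle f) ∧
      ∀ e : ℕ, {n | (phi (chOracle ∅) (f e) n).Dom} ≠ {n | (phi (chOracle ∅) e n).Dom}) := by
  constructor
  · rintro ⟨f, hfX, hdnc⟩
    have hF1 : Nat.Partrec fun n => psi n.unpair.1 :=
      Partrec.nat_iff.1 (psi_partrec.comp (Primrec.fst.comp Primrec.unpair).to_comp)
    obtain ⟨r, hrc, hr⟩ := phi_smn hF1
    have hG : Nat.Partrec fun n =>
        Nat.rfind fun _ => Part.some (decide (n.unpair.2 = n.unpair.1)) := by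
      apply Partrec.nat_iff.1
      apply Partrec.rfind
      have hcomp : Computable₂ fun (n : ℕ) (_ : ℕ) => decide (n.unpair.2 = n.unpair.1) :=
        ((Primrec.eq.comp (Primrec.snd.comp (Primrec.unpair.comp Primrec.fst))
          (Primrec.fst.comp (Primrec.unpair.comp Primrec.fst)))).decide.to_comp.to₂
      exact hcomp.partrec₂
    obtain ⟨k₂, hk2c, hk2⟩ := phi_smn hG
    refine ⟨fun e => k₂ (f (r e)),
      (hk2c.recIn _).compTotal (hfX.compTotal (hrc.recIn _)), ?_⟩
    intro e hset
    have hdomk : ∀ m x : ℕ, (phi (chOracle ∅) (k₂ m) x).Dom ↔ x = m := by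
      intro m x
      rw [hk2 m x]
      refine Nat.rfind_dom.trans ?_
      constructor
      · rintro ⟨n, hn, -⟩
        simpa using hn
      · intro hxm
        exact ⟨0, by simp [hxm], fun {_} _ => trivial⟩
    have hre : phi (chOracle ∅) (r e) (r e) = psi e := by
      rw [hr e (r e)]
      simp [Nat.unpair_pair]
    have hiff := fun y => Set.ext_iff.1 hset y
    simp only [Set.mem_setOf_eq] at hiff
    by_cases hW : ∃ x, (phi (chOracle ∅) e x).Dom
    · obtain ⟨x, hx⟩ := hW
      have hd : (psi e).Dom := psi_dom hx
      have hymem : (psi e).get hd ∈ psi e := Part.get_mem hd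
      have hyW : (phi (chOracle ∅) e ((psi e).get hd)).Dom := psi_mem hymem
      have hne : f (r e) ≠ (psi e).get hd := by
        intro hEq
        apply hdnc (r e)
        rw [hre, hEq]
        exact hymem
      exact hne ((hdomk _ _).1 ((hiff _).2 hyW)).symm
    · push_neg at hW
      exact hW _ ((hiff _).1 ((hdomk (f (r e)) (f (r e))).2 rfl))
  · rintro ⟨f, hfX, hfpf⟩
    have hU : Nat.Partrec fun n => (phi (chOracle ∅) n.unpair.1 n.unpair.1).bind
        fun i => phi (chOracle ∅) i n.unpair.2 := by
      apply Partrec.nat_iff.1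
      apply Partrec.bind
      · exact phi_partrec.comp
          (((Primrec.fst.comp Primrec.unpair).pair (Primrec.fst.comp Primrec.unpair)).to_comp)
      · exact (phi_partrec.comp
          ((Primrec.snd.pair ((Primrec.snd.comp Primrec.unpair).comp Primrec.fst)).to_comp)).to₂
    obtain ⟨h, hhc, hh⟩ := phi_smn hU
    refine ⟨fun e => f (h e), hfX.compTotal (hhc.recIn _), ?_⟩
    intro e hmem
    have heq : phi (chOracle ∅) e e = Part.some (f (h e)) := Part.eq_some_iff.2 hmem
    have hsame : ∀ x, phi (chOracle ∅) (h e) x = phi (chOracle ∅) (f (h e)) x := by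
      intro x
      rw [hh e x]
      simp only [Nat.unpair_pair, heq]
      exact Part.bind_some _ _
    apply hfpf (h e)
    ext n
    simp only [Set.mem_setOf_eq, hsame n]




/-- A set computes a diagonally non-computable function iff it computes a
fixpoint-free function. -/
theorem stmt2 (X : Set ℕ) :
    (∃ f : ℕ → ℕ, RecIn (chOracle X) (fnOracle f) ∧
      ∀ e : ℕ, f e ∉ phi (chOracle ∅) e e) ↔
    (∃ f : ℕ → ℕ, RecIn (chOracle X) (fnOracle f) ∧
      ∀ e : ℕ, {n | (phi (chOracle ∅) (f e) n).Dom} ≠ {n | (phi (chOracle ∅) e n).Dom}) :=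
  stmt2_aux X

end
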